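/- Let X ⊆ ℝⁿ be nonempty, c ∈ ℝⁿ, and suppose ω ↦ Q(x,ξ(ω)) is integrable for all x ∈ X. Let 𝒫⁰ := {Ξ} and for k ≥ 1 let 𝒫^k be a finite measurable partition of Ξ that ℙ-refines 𝒫^{k−1}. For each k ≥ 1 let x_k ∈ X satisfy cᵀx_k + V_{𝒫^{k−1}}(x_k) ≤ cᵀx + V_{𝒫^{k−1}}(x) for all x ∈ X, and suppose V_{𝒫^k}(x_k) = V(x_k). Define z^L_k := cᵀx_k + V_{𝒫^{k−1}}(x_k) and z^U_k := min_{1 ≤ i ≤ k} (cᵀx_i + V_{𝒫^i}(x_i)). Then for every k ≥ 2: z^L_{k−1} ≤ z^L_k ≤ inf_{x ∈ X}(cᵀx + V(x)) ≤ z^U_k ≤ z^U_{k−1}. -/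

import Mathlib

open MeasureTheory
open scoped BigOperators Classical

noncomputable section

/-- The space of alea `Ξ = ℝ^{l×n} × ℝ^l`: pairs `ξ = (T, h)`. -/
abbrev Xi (l n : ℕ) := (Fin l → Fin n → ℝ) × (Fin l → ℝ)

/-- The dual admissible polyhedron `D = {λ : Wᵀλ ≤ q}`. -/
def polyD {l m : ℕ} (W : Fin l → Fin m → ℝ) (q : Fin m → ℝ) : Set (Fin l → ℝ) :=
  {lam | ∀ j, (∑ i, W i j * lam i) ≤ q j}

/-- Recourse cost `Q(x, ξ) = sup_{λ ∈ D} ⟨h - Tx, λ⟩ ∈ ℝ ∪ {+∞}` (as an `EReal`). -/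
def Qfun {l n m : ℕ} (W : Fin l → Fin m → ℝ) (q : Fin m → ℝ)
    (x : Fin n → ℝ) (ξ : Xi l n) : EReal :=
  ⨆ lam ∈ polyD W q, ((∑ i, (ξ.2 i - ∑ j, ξ.1 i j * x j) * lam i : ℝ) : EReal)

/-- A finite measurable partition of `α`, given as a `Finset` of sets. -/
def IsFinPartition {α : Type*} [MeasurableSpace α] (Ps : Finset (Set α)) : Prop :=
  (∀ P ∈ Ps, MeasurableSet P) ∧ ((Ps : Set (Set α)).PairwiseDisjoint id) ∧
    ⋃₀ (Ps : Set (Set α)) = Set.univ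

/-- Conditional expectation `E[ξ | ξ ∈ P] = E[ξ 1_{ξ ∈ P}] / ℙ[ξ ∈ P]`. -/
def condMean {Ω : Type*} [MeasurableSpace Ω] {l n : ℕ} (ℙ : Measure Ω)
    (ξ : Ω → Xi l n) (P : Set (Xi l n)) : Xi l n :=
  (ℙ (ξ ⁻¹' P)).toReal⁻¹ • ∫ ω in ξ ⁻¹' P, ξ ω ∂ℙ

/-- Expected cost-to-go of a partition: `V_Ps(x) = Σ_{P ∈ Ps, ℙ[ξ∈P] > 0} ℙ[ξ∈P] Q(x, E[ξ|P])`. -/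
def Vpart {Ω : Type*} [MeasurableSpace Ω] {l n m : ℕ} (W : Fin l → Fin m → ℝ)
    (q : Fin m → ℝ) (ℙ : Measure Ω) (ξ : Ω → Xi l n) (Ps : Finset (Set (Xi l n)))
    (x : Fin n → ℝ) : EReal :=
  ∑ P ∈ Ps, if 0 < ℙ (ξ ⁻¹' P) then
    ((ℙ (ξ ⁻¹' P)).toReal : EReal) * Qfun W q x (condMean ℙ ξ P) else 0

/-- True expected cost-to-go `V(x) = E[Q(x, ξ)] ∈ ℝ ∪ {+∞}`: the real integral when
`Q(x, ξ)` is integrable (a.e. finite with integrable real part), `+∞` otherwise. -/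
def Vtrue {Ω : Type*} [MeasurableSpace Ω] {l n m : ℕ} (W : Fin l → Fin m → ℝ)
    (q : Fin m → ℝ) (ℙ : Measure Ω) (ξ : Ω → Xi l n) (x : Fin n → ℝ) : EReal :=
  if (∀ᵐ ω ∂ℙ, Qfun W q x (ξ ω) ≠ ⊤) ∧
      Integrable (fun ω => (Qfun W q x (ξ ω)).toReal) ℙ then
    (((∫ ω, (Qfun W q x (ξ ω)).toReal ∂ℙ) : ℝ) : EReal)
  else ⊤

/-- `Ps` ℙ-refines `ℛ`: every `P ∈ Ps` is ℙ-essentially contained in some `R ∈ ℛ`. -/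
def PRefines {Ω : Type*} [MeasurableSpace Ω] {l n : ℕ} (ℙ : Measure Ω) (ξ : Ω → Xi l n)
    (Ps ℛ : Finset (Set (Xi l n))) : Prop :=
  ∀ P ∈ Ps, ∃ R ∈ ℛ, ℙ (ξ ⁻¹' (P ∩ R)) = ℙ (ξ ⁻¹' P)

/-- Conditional expectation `E[Q(x,ξ) | ξ ∈ P] ∈ ℝ ∪ {+∞}`: equal to
`E[Q(x,ξ) 1_{ξ∈P}] / ℙ[ξ∈P]` when `Q(x,ξ) 1_{ξ∈P}` is integrable, `+∞` otherwise. -/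
def condQ {Ω : Type*} [MeasurableSpace Ω] {l n m : ℕ} (W : Fin l → Fin m → ℝ)
    (q : Fin m → ℝ) (ℙ : Measure Ω) (ξ : Ω → Xi l n) (x : Fin n → ℝ)
    (P : Set (Xi l n)) : EReal :=
  if (∀ᵐ ω ∂ℙ, ξ ω ∈ P → Qfun W q x (ξ ω) ≠ ⊤) ∧
      IntegrableOn (fun ω => (Qfun W q x (ξ ω)).toReal) (ξ ⁻¹' P) ℙ then
    (((ℙ (ξ ⁻¹' P)).toReal⁻¹ * ∫ ω in ξ ⁻¹' P, (Qfun W q x (ξ ω)).toReal ∂ℙ : ℝ) : EReal)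
  else ⊤

/-- Subdifferential of an `EReal`-valued function at `x`. -/
def SubDiff {n : ℕ} (f : (Fin n → ℝ) → EReal) (x : Fin n → ℝ) : Set (Fin n → ℝ) :=
  {g | ∀ y, f x + ((∑ i, g i * (y i - x i) : ℝ) : EReal) ≤ f y}

-- helper: coe of finset sum
lemma ereal_coe_fsum {ι : Type*} (s : Finset ι) (f : ι → ℝ) :
    ((∑ i ∈ s, f i : ℝ) : EReal) = ∑ i ∈ s, ((f i : ℝ) : EReal) := by
  classical
  induction s using Finset.induction_on with
  | empty => simp
  | insert _ _ h ih => rw [Finset.sum_insert h, Finset.sum_insert h, EReal.coe_add, ih]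

def erealMulIso (c : ℝ) (hc : 0 < c) : EReal ≃o EReal where
  toFun x := (c : EReal) * x
  invFun x := ((c⁻¹ : ℝ) : EReal) * x
  left_inv x := by
    show ((c⁻¹ : ℝ) : EReal) * ((c : EReal) * x) = x
    rw [← mul_assoc, ← EReal.coe_mul, inv_mul_cancel₀ hc.ne', EReal.coe_one, one_mul]
  right_inv x := by
    show ((c : ℝ) : EReal) * (((c⁻¹ : ℝ) : EReal) * x) = x
    rw [← mul_assoc, ← EReal.coe_mul, mul_inv_cancel₀ hc.ne', EReal.coe_one, one_mul]
  map_rel_iff' := by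
    intro a b
    simp only [Equiv.coe_fn_mk]
    constructor
    · intro h
      have h2 := mul_le_mul_of_nonneg_left h
        (EReal.coe_nonneg.2 (inv_pos.2 hc).le)
      rwa [← mul_assoc, ← mul_assoc, ← EReal.coe_mul, inv_mul_cancel₀ hc.ne',
        EReal.coe_one, one_mul, one_mul] at h2
    · intro h
      exact mul_le_mul_of_nonneg_left h (EReal.coe_nonneg.2 hc.le)

lemma ereal_mul_biSup {c : ℝ} (hc : 0 < c) {ι : Type*} {p : ι → Prop} (f : ι → EReal) :
    (c : EReal) * (⨆ i, ⨆ _ : p i, f i) = ⨆ i, ⨆ _ : p i, (c : EReal) * f i := by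
  rw [iSup_subtype', iSup_subtype']
  exact (erealMulIso c hc).map_iSup _

def Lmap {l n : ℕ} (x : Fin n → ℝ) (lam : Fin l → ℝ) : Xi l n →L[ℝ] ℝ :=
  LinearMap.toContinuousLinearMap
  { toFun := fun ζ => ∑ i, (ζ.2 i - ∑ j, ζ.1 i j * x j) * lam i
    map_add' := by
      intro a b
      rw [← Finset.sum_add_distrib]
      refine Finset.sum_congr rfl fun i _ => ?_
      simp only [Prod.fst_add, Prod.snd_add, Pi.add_apply]
      rw [show ∑ j, (a.1 i j + b.1 i j) * x j
        = (∑ j, a.1 i j * x j) + ∑ j, b.1 i j * x j by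
          rw [← Finset.sum_add_distrib]; exact Finset.sum_congr rfl fun j _ => add_mul _ _ _]
      ring
    map_smul' := by
      intro c a
      simp only [RingHom.id_apply, smul_eq_mul, Finset.mul_sum]
      refine Finset.sum_congr rfl fun i _ => ?_
      simp only [Prod.smul_fst, Prod.smul_snd, Pi.smul_apply, smul_eq_mul]
      rw [show ∑ j, c * a.1 i j * x j = c * ∑ j, a.1 i j * x j by
        rw [Finset.mul_sum]; exact Finset.sum_congr rfl fun j _ => by ring]
      ring }

@[simp] lemma Lmap_apply {l n : ℕ} (x : Fin n → ℝ) (lam : Fin l → ℝ) (ζ : Xi l n) :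
    Lmap x lam ζ = ∑ i, (ζ.2 i - ∑ j, ζ.1 i j * x j) * lam i := rfl

lemma Qfun_eq {l n m : ℕ} (W : Fin l → Fin m → ℝ) (q : Fin m → ℝ) (x : Fin n → ℝ) (ζ : Xi l n) :
    Qfun W q x ζ = ⨆ lam ∈ polyD W q, ((Lmap x lam ζ : ℝ) : EReal) := rfl

lemma coe_Lmap_le_Qfun {l n m : ℕ} {W : Fin l → Fin m → ℝ} {q : Fin m → ℝ}
    {lam : Fin l → ℝ} (hlam : lam ∈ polyD W q) (x : Fin n → ℝ) (ζ : Xi l n) :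
    ((Lmap x lam ζ : ℝ) : EReal) ≤ Qfun W q x ζ :=
  le_iSup₂ (f := fun lam (_ : lam ∈ polyD W q) => ((Lmap x lam ζ : ℝ) : EReal)) lam hlam

lemma Qfun_ne_bot {l n m : ℕ} {W : Fin l → Fin m → ℝ} {q : Fin m → ℝ}
    (hD : (polyD W q).Nonempty) (x : Fin n → ℝ) (ζ : Xi l n) : Qfun W q x ζ ≠ ⊥ := by
  obtain ⟨lam, hlam⟩ := hD
  intro h
  exact (EReal.bot_lt_coe (Lmap x lam ζ)).not_ge (h ▸ coe_Lmap_le_Qfun hlam x ζ)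

section Main
variable {Ω : Type*} [MeasurableSpace Ω] {l n m : ℕ}
  {W : Fin l → Fin m → ℝ} {q : Fin m → ℝ} {ℙ : Measure Ω} {ξ : Ω → Xi l n}

lemma isFinPartition_univ {α : Type*} [MeasurableSpace α] :
    IsFinPartition ({Set.univ} : Finset (Set α)) := by
  refine ⟨by simp, by simp, by simp⟩

lemma cell_bound [IsProbabilityMeasure ℙ] (hD : (polyD W q).Nonempty)
    (hξint : Integrable ξ ℙ) {x : Fin n → ℝ}
    (hae : ∀ᵐ ω ∂ℙ, Qfun W q x (ξ ω) ≠ ⊤)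
    (hint : Integrable (fun ω => (Qfun W q x (ξ ω)).toReal) ℙ)
    (P : Set (Xi l n)) (hμ : 0 < ℙ (ξ ⁻¹' P)) :
    ((ℙ (ξ ⁻¹' P)).toReal : EReal) * Qfun W q x (condMean ℙ ξ P) ≤
      ((∫ ω in ξ ⁻¹' P, (Qfun W q x (ξ ω)).toReal ∂ℙ : ℝ) : EReal) := by
  set μp := (ℙ (ξ ⁻¹' P)).toReal with hμpdef
  have hμp0 : 0 < μp := ENNReal.toReal_pos hμ.ne' (measure_ne_top ℙ _)
  set r := ∫ ω in ξ ⁻¹' P, (Qfun W q x (ξ ω)).toReal ∂ℙ with hr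
  have hQle : Qfun W q x (condMean ℙ ξ P) ≤ ((μp⁻¹ * r : ℝ) : EReal) := by
    rw [Qfun_eq]
    refine iSup₂_le fun lam hlam => ?_
    rw [EReal.coe_le_coe_iff]
    have h1 : Lmap x lam (condMean ℙ ξ P)
        = μp⁻¹ * Lmap x lam (∫ ω in ξ ⁻¹' P, ξ ω ∂ℙ) := by
      rw [condMean, _root_.map_smul, smul_eq_mul]
    have h2 : Lmap x lam (∫ ω in ξ ⁻¹' P, ξ ω ∂ℙ)
        = ∫ ω in ξ ⁻¹' P, Lmap x lam (ξ ω) ∂ℙ :=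
      ((Lmap x lam).integral_comp_comm hξint.integrableOn).symm
    have h3 : ∫ ω in ξ ⁻¹' P, Lmap x lam (ξ ω) ∂ℙ ≤ r := by
      refine integral_mono_ae (((Lmap x lam).integrable_comp hξint).integrableOn)
        hint.integrableOn ?_
      refine ae_restrict_of_ae ?_
      filter_upwards [hae] with ω hω
      have hle := coe_Lmap_le_Qfun hlam x (ξ ω)
      rw [← EReal.coe_toReal hω (Qfun_ne_bot hD x (ξ ω))] at hle
      exact EReal.coe_le_coe_iff.1 hle
    rw [h1, h2]
    exact mul_le_mul_of_nonneg_left h3 (inv_nonneg.2 hμp0.le)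
  calc ((μp : ℝ) : EReal) * Qfun W q x (condMean ℙ ξ P)
      ≤ ((μp : ℝ) : EReal) * ((μp⁻¹ * r : ℝ) : EReal) :=
        mul_le_mul_of_nonneg_left hQle (EReal.coe_nonneg.2 hμp0.le)
    _ = ((r : ℝ) : EReal) := by
        rw [← EReal.coe_mul, ← mul_assoc, mul_inv_cancel₀ hμp0.ne', one_mul]

lemma partition_integral_sum [IsProbabilityMeasure ℙ] (hξmeas : Measurable ξ)
    {Ps : Finset (Set (Xi l n))} (hP : IsFinPartition Ps)
    {f : Ω → ℝ} (hf : Integrable f ℙ) :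
    ∑ P ∈ Ps, ∫ ω in ξ ⁻¹' P, f ω ∂ℙ = ∫ ω, f ω ∂ℙ := by
  have hU : (⋃ P ∈ Ps, ξ ⁻¹' P) = Set.univ := by
    rw [← Set.preimage_iUnion₂]
    have hP2 := hP.2.2
    have h2 : ⋃ P ∈ Ps, P = Set.univ := by
      rw [Set.sUnion_eq_biUnion, Finset.set_biUnion_coe] at hP2; exact hP2
    rw [h2, Set.preimage_univ]
  rw [← integral_biUnion_finset Ps (fun P hPm => hξmeas (hP.1 P hPm))
      (fun P hPm Q hQm hne => (hP.2.1 hPm hQm hne).preimage ξ)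
      (fun P _ => hf.integrableOn), hU, setIntegral_univ]

lemma Vpart_le_Vtrue [IsProbabilityMeasure ℙ] (hD : (polyD W q).Nonempty)
    (hξmeas : Measurable ξ) (hξint : Integrable ξ ℙ) {x : Fin n → ℝ}
    (hae : ∀ᵐ ω ∂ℙ, Qfun W q x (ξ ω) ≠ ⊤)
    (hint : Integrable (fun ω => (Qfun W q x (ξ ω)).toReal) ℙ)
    {Ps : Finset (Set (Xi l n))} (hP : IsFinPartition Ps) :
    Vpart W q ℙ ξ Ps x ≤ Vtrue W q ℙ ξ x := by
  rw [Vtrue, if_pos ⟨hae, hint⟩, Vpart]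
  calc (∑ P ∈ Ps, if 0 < ℙ (ξ ⁻¹' P) then
          ((ℙ (ξ ⁻¹' P)).toReal : EReal) * Qfun W q x (condMean ℙ ξ P) else 0)
      ≤ ∑ P ∈ Ps, ((∫ ω in ξ ⁻¹' P, (Qfun W q x (ξ ω)).toReal ∂ℙ : ℝ) : EReal) := by
        refine Finset.sum_le_sum fun P hPm => ?_
        split_ifs with h
        · exact cell_bound hD hξint hae hint P h
        · have h0 : ℙ (ξ ⁻¹' P) = 0 := nonpos_iff_eq_zero.1 (not_lt.1 h)
          rw [setIntegral_measure_zero _ h0]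
          simp
    _ = (((∑ P ∈ Ps, ∫ ω in ξ ⁻¹' P, (Qfun W q x (ξ ω)).toReal ∂ℙ) : ℝ) : EReal) :=
        (ereal_coe_fsum _ _).symm
    _ = _ := by rw [partition_integral_sum hξmeas hP hint]


lemma Vpart_mono [IsProbabilityMeasure ℙ] (hD : (polyD W q).Nonempty)
    (hξmeas : Measurable ξ) (hξint : Integrable ξ ℙ) (x : Fin n → ℝ)
    {Ps Rs : Finset (Set (Xi l n))}
    (hP : IsFinPartition Ps) (hR : IsFinPartition Rs)
    (href : PRefines ℙ ξ Ps Rs) :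
    Vpart W q ℙ ξ Rs x ≤ Vpart W q ℙ ξ Ps x := by
  classical
  choose! rho hrho1 hrho2 using href
  have hfib := Finset.sum_fiberwise_of_maps_to (g := rho) (t := Rs) hrho1
    (fun P => if 0 < ℙ (ξ ⁻¹' P) then
      ((ℙ (ξ ⁻¹' P)).toReal : EReal) * Qfun W q x (condMean ℙ ξ P) else 0)
  rw [Vpart, Vpart, ← hfib]
  refine Finset.sum_le_sum fun R hRmem => ?_
  by_cases hμR : 0 < ℙ (ξ ⁻¹' R)
  · -- positive-measure coarse cell
    rw [if_pos hμR]
    have hμR0 : 0 < (ℙ (ξ ⁻¹' R)).toReal :=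
      ENNReal.toReal_pos hμR.ne' (measure_ne_top ℙ _)
    have hRmeas : MeasurableSet R := hR.1 R hRmem
    -- decompose the integral over R into the fine cells mapped to R
    have hdecomp : ∫ ω in ξ ⁻¹' R, ξ ω ∂ℙ
        = ∑ P ∈ Ps.filter (fun P => rho P = R), ∫ ω in ξ ⁻¹' P, ξ ω ∂ℙ := by
      have hsetR' : R = ⋃ P ∈ Ps, (P ∩ R) := by
        apply Set.Subset.antisymm
        · intro ζ hζ
          have hmem : ζ ∈ ⋃₀ (Ps : Set (Set (Xi l n))) := by
            rw [hP.2.2]; exact Set.mem_univ ζ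
          obtain ⟨P, hPm, hPζ⟩ := hmem
          exact Set.mem_iUnion₂.2 ⟨P, Finset.mem_coe.1 hPm, hPζ, hζ⟩
        · intro ζ hζ
          obtain ⟨P, hPm, hζ2⟩ := Set.mem_iUnion₂.1 hζ
          exact hζ2.2
      have hsetR : ξ ⁻¹' R = ⋃ P ∈ Ps, ξ ⁻¹' (P ∩ R) := by
        rw [← Set.preimage_iUnion₂, ← hsetR']
      rw [hsetR, integral_biUnion_finset Ps
        (fun P hPm => hξmeas ((hP.1 P hPm).inter hRmeas))
        (fun P hPm Q hQm hne =>
          ((hP.2.1 hPm hQm hne).mono Set.inter_subset_left Set.inter_subset_left).preimage ξ)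
        (fun P _ => hξint.integrableOn), Finset.sum_filter]
      refine Finset.sum_congr rfl fun P hPm => ?_
      by_cases hPR : rho P = R
      · rw [if_pos hPR]
        have hsub : ξ ⁻¹' (P ∩ R) ⊆ ξ ⁻¹' P := Set.preimage_mono Set.inter_subset_left
        have hmeq : ℙ (ξ ⁻¹' (P ∩ R)) = ℙ (ξ ⁻¹' P) := by rw [← hPR]; exact hrho2 P hPm
        exact setIntegral_congr_set (ae_eq_of_subset_of_measure_ge hsub hmeq.ge
          (hξmeas ((hP.1 P hPm).inter hRmeas)).nullMeasurableSet (measure_ne_top ℙ _))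
      · rw [if_neg hPR]
        have h0 : ℙ (ξ ⁻¹' (P ∩ R)) = 0 := by
          have hdisj : Disjoint (P ∩ R) (P ∩ rho P) :=
            (hR.2.1 hRmem (hrho1 P hPm) (fun h => hPR h.symm)).mono
              Set.inter_subset_right Set.inter_subset_right
          have hsub2 : ξ ⁻¹' (P ∩ R) ⊆ ξ ⁻¹' P \ ξ ⁻¹' (P ∩ rho P) := by
            intro ω hω
            exact ⟨hω.1, fun hc => Set.disjoint_left.1 hdisj hω hc⟩
          have hdiff : ℙ (ξ ⁻¹' P \ ξ ⁻¹' (P ∩ rho P)) = 0 := by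
            rw [measure_diff (Set.preimage_mono Set.inter_subset_left)
              (hξmeas ((hP.1 P hPm).inter (hR.1 _ (hrho1 P hPm)))).nullMeasurableSet
              (measure_ne_top ℙ _), hrho2 P hPm, tsub_self]
          exact nonpos_iff_eq_zero.1 ((measure_mono hsub2).trans hdiff.le)
        exact setIntegral_measure_zero _ h0
    -- rewrite the left-hand side as a biSup of linear functionals of ∫_R ξ
    have hQcm : ((ℙ (ξ ⁻¹' R)).toReal : EReal) * Qfun W q x (condMean ℙ ξ R)
        = ⨆ lam ∈ polyD W q, ((Lmap x lam (∫ ω in ξ ⁻¹' R, ξ ω ∂ℙ) : ℝ) : EReal) := by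
      rw [Qfun_eq, ereal_mul_biSup hμR0]
      refine iSup_congr fun lam => iSup_congr fun hlam => ?_
      rw [← EReal.coe_mul]
      congr 1
      rw [condMean, _root_.map_smul, smul_eq_mul, ← mul_assoc,
        mul_inv_cancel₀ hμR0.ne', one_mul]
    rw [hQcm]
    refine iSup₂_le fun lam hlam => ?_
    rw [hdecomp, map_sum, ereal_coe_fsum]
    refine Finset.sum_le_sum fun P hPm => ?_
    rw [Finset.mem_filter] at hPm
    by_cases hμP : 0 < ℙ (ξ ⁻¹' P)
    · rw [if_pos hμP]
      have hμP0 : 0 < (ℙ (ξ ⁻¹' P)).toReal :=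
        ENNReal.toReal_pos hμP.ne' (measure_ne_top ℙ _)
      have hL : Lmap x lam (∫ ω in ξ ⁻¹' P, ξ ω ∂ℙ)
          = (ℙ (ξ ⁻¹' P)).toReal * Lmap x lam (condMean ℙ ξ P) := by
        rw [condMean, _root_.map_smul, smul_eq_mul, ← mul_assoc,
          mul_inv_cancel₀ hμP0.ne', one_mul]
      rw [hL, EReal.coe_mul]
      exact mul_le_mul_of_nonneg_left (coe_Lmap_le_Qfun hlam x _)
        (EReal.coe_nonneg.2 hμP0.le)
    · rw [if_neg hμP]
      have h0 : ℙ (ξ ⁻¹' P) = 0 := nonpos_iff_eq_zero.1 (not_lt.1 hμP)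
      rw [setIntegral_measure_zero _ h0, map_zero]
      simp
  · -- null coarse cell: both sides vanish
    rw [if_neg hμR]
    have hz : ∀ P ∈ Ps.filter (fun P => rho P = R),
        (if 0 < ℙ (ξ ⁻¹' P) then
          ((ℙ (ξ ⁻¹' P)).toReal : EReal) * Qfun W q x (condMean ℙ ξ P) else 0) = 0 := by
      intro P hPm
      rw [Finset.mem_filter] at hPm
      have h1 : ℙ (ξ ⁻¹' P) = 0 := by
        have heq := hrho2 P hPm.1
        rw [hPm.2] at heq
        have hle : ℙ (ξ ⁻¹' (P ∩ R)) ≤ ℙ (ξ ⁻¹' R) :=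
          measure_mono (Set.preimage_mono Set.inter_subset_right)
        rw [heq] at hle
        exact nonpos_iff_eq_zero.1 (hle.trans (not_lt.1 hμR))
      rw [if_neg (by rw [h1]; exact lt_irrefl 0)]
    rw [Finset.sum_congr rfl hz, Finset.sum_const, smul_zero]

end Main

/-- Lemma 10: monotonicity of the bounds produced by the generic
adaptive partition-based method: `z^L_{k-1} ≤ z^L_k ≤ val(2SLP) ≤ z^U_k ≤ z^U_{k-1}`. -/
theorem apm_bounds_monotone
    {Ω : Type*} [MeasurableSpace Ω] {l n m : ℕ}
    (hl : 0 < l) (hn : 0 < n) (hm : 0 < m)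
    (W : Fin l → Fin m → ℝ) (q : Fin m → ℝ) (hD : (polyD W q).Nonempty)
    (ℙ : Measure Ω) [IsProbabilityMeasure ℙ]
    (ξ : Ω → Xi l n) (hξmeas : Measurable ξ) (hξint : Integrable ξ ℙ)
    (X : Set (Fin n → ℝ)) (hX : X.Nonempty) (c : Fin n → ℝ)
    (hQint : ∀ x ∈ X, (∀ᵐ ω ∂ℙ, Qfun W q x (ξ ω) ≠ ⊤) ∧
      Integrable (fun ω => (Qfun W q x (ξ ω)).toReal) ℙ)
    (Ps : ℕ → Finset (Set (Xi l n)))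
    (hPs0 : Ps 0 = {Set.univ})
    (hPart : ∀ k, 1 ≤ k → IsFinPartition (Ps k))
    (hRef : ∀ k, 1 ≤ k → PRefines ℙ ξ (Ps k) (Ps (k - 1)))
    (x : ℕ → Fin n → ℝ) (hxX : ∀ k, 1 ≤ k → x k ∈ X)
    (hopt : ∀ k, 1 ≤ k → ∀ y ∈ X,
      ((∑ i, c i * x k i : ℝ) : EReal) + Vpart W q ℙ ξ (Ps (k - 1)) (x k) ≤
        ((∑ i, c i * y i : ℝ) : EReal) + Vpart W q ℙ ξ (Ps (k - 1)) y)
    (hadapt : ∀ k, 1 ≤ k → Vpart W q ℙ ξ (Ps k) (x k) = Vtrue W q ℙ ξ (x k)) :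
    let zL : ℕ → EReal := fun k =>
      ((∑ i, c i * x k i : ℝ) : EReal) + Vpart W q ℙ ξ (Ps (k - 1)) (x k)
    let zU : ℕ → EReal := fun k =>
      ⨅ i ∈ Finset.Icc 1 k, (((∑ i', c i' * x i i' : ℝ) : EReal) + Vpart W q ℙ ξ (Ps i) (x i))
    let valP : EReal := ⨅ y ∈ X, (((∑ i, c i * y i : ℝ) : EReal) + Vtrue W q ℙ ξ y)
    ∀ k, 2 ≤ k → zL (k - 1) ≤ zL k ∧ zL k ≤ valP ∧ valP ≤ zU k ∧ zU k ≤ zU (k - 1) := by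

  intro zL zU valP k hk
  have hk1 : 1 ≤ k := by omega
  have hk1' : 1 ≤ k - 1 := by omega
  have hcoarse : IsFinPartition (Ps (k - 1 - 1)) := by
    rcases Nat.lt_or_ge (k - 1 - 1) 1 with h | h
    · have h0 : k - 1 - 1 = 0 := by omega
      rw [h0, hPs0]
      exact isFinPartition_univ
    · exact hPart _ h
  refine ⟨?_, ?_, ?_, ?_⟩
  · -- zL (k-1) ≤ zL k
    show zL (k - 1) ≤ zL k
    calc zL (k - 1)
        ≤ ((∑ i, c i * x k i : ℝ) : EReal) + Vpart W q ℙ ξ (Ps (k - 1 - 1)) (x k) :=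
          hopt (k - 1) hk1' (x k) (hxX k hk1)
      _ ≤ ((∑ i, c i * x k i : ℝ) : EReal) + Vpart W q ℙ ξ (Ps (k - 1)) (x k) :=
          add_le_add_right (Vpart_mono hD hξmeas hξint (x k)
            (hPart (k - 1) hk1') hcoarse (hRef (k - 1) hk1')) _
  · -- zL k ≤ valP
    refine le_iInf₂ fun y hy => ?_
    calc zL k
        ≤ ((∑ i, c i * y i : ℝ) : EReal) + Vpart W q ℙ ξ (Ps (k - 1)) y :=
          hopt k hk1 y hy
      _ ≤ ((∑ i, c i * y i : ℝ) : EReal) + Vtrue W q ℙ ξ y :=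
          add_le_add_right (Vpart_le_Vtrue hD hξmeas hξint (hQint y hy).1 (hQint y hy).2
            (hPart (k - 1) hk1')) _
  · -- valP ≤ zU k
    refine le_iInf₂ fun i hi => ?_
    have hi1 : 1 ≤ i := (Finset.mem_Icc.1 hi).1
    rw [hadapt i hi1]
    exact iInf₂_le (x i) (hxX i hi1)
  · -- zU k ≤ zU (k-1)
    refine le_iInf₂ fun i hi => ?_
    have hi' : i ∈ Finset.Icc 1 k := by
      rw [Finset.mem_Icc] at hi ⊢
      omega
    exact iInf₂_le i hi'


end
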